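/- Let (W,S) be a Coxeter system with Coxeter matrix m and let T ⊆ S be such that for every t ∈ T and s ∈ S∖T the exponent m_{st} is even or ∞. Then every w ∈ W decomposes uniquely as w = u·v with u ∈ ker φ_T and v ∈ W_{S∖T}. Moreover, if S_0 ⊆ T is closed under conjugacy of generators (if s ∈ S_0 and s' ∈ S is conjugate in W to s then s' ∈ S_0), then ℓ_{S_0}(w) = ℓ_{S_0}(u). -/

import Mathlib

section UniqueDecompositionAux
open CoxeterSystem List
variable {B W : Type*} [Group W] {M : CoxeterMatrix B} (cs : CoxeterSystem M W)

theorem alt_drop (i j : B) : ∀ d n, List.drop d (alternatingWord i j n) = alternatingWord i j (n - d) := by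
  intro d
  induction d with
  | zero => simp
  | succ d ih =>
    intro n
    match n with
    | 0 => simp [alternatingWord]
    | n+1 =>
      rw [alternatingWord_succ', show n + 1 - (d+1) = n - d by omega, ← ih n]
      simp

theorem sj_q_pow (i j : B) (c : ℕ) :
    cs.simple j * (cs.simple i * cs.simple j) ^ c
      = ((cs.simple i * cs.simple j) ^ c)⁻¹ * cs.simple j := by
  have base : cs.simple j * (cs.simple i * cs.simple j) = (cs.simple i * cs.simple j)⁻¹ * cs.simple j := by
    rw [mul_inv_rev, cs.inv_simple, cs.inv_simple]; group
  induction c with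
  | zero => simp
  | succ c ih =>
    rw [pow_succ, ← mul_assoc, ih, mul_assoc, base, ← mul_assoc, ← mul_inv_rev]; rw [← pow_succ', ← pow_succ]

theorem ris_alt (i j : B) (a k : ℕ) :
    (cs.rightInvSeq (alternatingWord i j (a + k + 1))).getD k 1
      = ((cs.simple i * cs.simple j) ^ a)⁻¹ * cs.simple j := by
  have hget : (alternatingWord i j (a + k + 1))[k]? = some (if Even a then j else i) := by
    have h1 : (alternatingWord i j (a + k + 1))[k]?
        = (List.drop k (alternatingWord i j (a + k + 1)))[0]? := by
      simp [List.getElem?_drop]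
    rw [h1, alt_drop, show a + k + 1 - k = a + 1 by omega, alternatingWord_succ']
    simp
  rw [cs.getD_rightInvSeq, alt_drop, show a + k + 1 - (k + 1) = a by omega, hget,
    cs.prod_alternatingWord_eq_mul_pow]
  rcases Nat.even_or_odd a with he | ho
  · obtain ⟨c, hc⟩ := he
    rw [if_pos ⟨c, hc⟩, if_pos ⟨c, hc⟩, show a / 2 = c by omega, one_mul]
    simp only [Option.map_some, Option.getD_some]
    calc ((cs.simple i * cs.simple j) ^ c)⁻¹ * cs.simple j * (cs.simple i * cs.simple j) ^ c
        = ((cs.simple i * cs.simple j) ^ c)⁻¹ * (((cs.simple i * cs.simple j) ^ c)⁻¹ * cs.simple j) := by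
          rw [mul_assoc, sj_q_pow]
      _ = ((cs.simple i * cs.simple j) ^ a)⁻¹ * cs.simple j := by
          rw [hc, pow_add]; group
  · obtain ⟨c, hc⟩ := ho
    rw [if_neg (Nat.not_even_iff_odd.mpr ⟨c, hc⟩), if_neg (Nat.not_even_iff_odd.mpr ⟨c, hc⟩),
        show a / 2 = c by omega]
    simp only [Option.map_some, Option.getD_some]
    rw [mul_inv_rev, cs.inv_simple]
    calc ((cs.simple i * cs.simple j) ^ c)⁻¹ * cs.simple j * cs.simple i *
          (cs.simple j * (cs.simple i * cs.simple j) ^ c)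
        = ((cs.simple i * cs.simple j) ^ c)⁻¹ *
            (cs.simple j * ((cs.simple i * cs.simple j) ^ (c + 1))) := by
          rw [pow_succ']; simp only [mul_assoc]
      _ = ((cs.simple i * cs.simple j) ^ c)⁻¹ * (((cs.simple i * cs.simple j) ^ (c+1))⁻¹ * cs.simple j) := by
          rw [sj_q_pow]
      _ = ((cs.simple i * cs.simple j) ^ a)⁻¹ * cs.simple j := by
          rw [hc, show 2 * c + 1 = (c + 1) + c by omega, pow_add]; group

theorem ris_alt_even_count [DecidableEq W] (i j : B) (t : W) :
    Even ((cs.rightInvSeq (alternatingWord i j (2 * M i j))).count t) := by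
  set m := M i j with hm
  set L := cs.rightInvSeq (alternatingWord i j (2 * m)) with hL
  have hlen : L.length = 2 * m := by
    rw [hL, cs.length_rightInvSeq, length_alternatingWord]
  have key : ∀ n, n < 2 * m →
      L.getD n 1 = ((cs.simple i * cs.simple j) ^ (2 * m - 1 - n))⁻¹ * cs.simple j := by
    intro n hn
    have h := ris_alt cs i j (2 * m - 1 - n) n
    rw [show 2 * m - 1 - n + n + 1 = 2 * m by omega] at h
    exact h
  have hq : (cs.simple i * cs.simple j) ^ m = 1 := cs.simple_mul_simple_pow i j
  have hhalf : L.drop m = L.take m := by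
    apply List.ext_getElem (by simp [hlen]; omega)
    intro k hk1 hk2
    rw [List.getElem_drop, List.getElem_take]
    have hk : k < m := by simp [hlen] at hk2; omega
    rw [← List.getD_eq_getElem L 1, ← List.getD_eq_getElem L 1,
      key _ (by omega), key _ (by omega),
      show 2 * m - 1 - (m + k) = m - 1 - k by omega,
      show 2 * m - 1 - k = (m - 1 - k) + m by omega, pow_add, hq, mul_one]
  have hsplit : L = L.take m ++ L.take m := by
    conv_lhs => rw [← List.take_append_drop m L, hhalf]
  rw [hsplit, List.count_append]
  exact Even.add_self _

def sigmaAux [DecidableEq W] (i : B) : W × ZMod 2 → W × ZMod 2 :=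
  fun p => (cs.simple i * p.1 * cs.simple i, p.2 + if p.1 = cs.simple i then 1 else 0)

theorem sigmaAux_involutive [DecidableEq W] (i : B) : Function.Involutive (sigmaAux cs i) := by
  intro p
  have hss : cs.simple i * cs.simple i = 1 := cs.simple_mul_simple_self i
  have hiff : cs.simple i * p.1 * cs.simple i = cs.simple i ↔ p.1 = cs.simple i := by
    constructor
    · intro h
      have := congrArg (fun x => cs.simple i * x * cs.simple i) h
      simpa [mul_assoc, hss] using this
    · intro h; rw [h]; rw [mul_assoc, hss, mul_one]
  ext
  · show cs.simple i * (cs.simple i * p.1 * cs.simple i) * cs.simple i = p.1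
    calc cs.simple i * (cs.simple i * p.1 * cs.simple i) * cs.simple i
        = (cs.simple i * cs.simple i) * p.1 * (cs.simple i * cs.simple i) := by group
      _ = p.1 := by rw [hss]; group
  · show p.2 + (if p.1 = cs.simple i then 1 else 0)
        + (if cs.simple i * p.1 * cs.simple i = cs.simple i then (1 : ZMod 2) else 0) = p.2
    by_cases h : p.1 = cs.simple i
    · rw [if_pos h, if_pos (hiff.mpr h), add_assoc]
      norm_num
      decide
    · rw [if_neg h, if_neg (fun hc => h (hiff.mp hc))]
      simp

def sigmaPerm [DecidableEq W] (i : B) : Equiv.Perm (W × ZMod 2) := (sigmaAux_involutive cs i).toPerm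

theorem sigma_prod [DecidableEq W] (ω : List B) (p : W × ZMod 2) :
    ((ω.map (sigmaPerm cs)).prod) p =
      (cs.wordProd ω * p.1 * (cs.wordProd ω)⁻¹,
        p.2 + ((cs.rightInvSeq ω).count p.1 : ZMod 2)) := by
  induction ω with
  | nil => simp [cs.wordProd_nil]
  | cons i ω' ih =>
    have hris : cs.rightInvSeq (i :: ω') =
        ((cs.wordProd ω')⁻¹ * cs.simple i * cs.wordProd ω') :: cs.rightInvSeq ω' := rfl
    rw [List.map_cons, List.prod_cons, Equiv.Perm.mul_apply, ih]
    show sigmaAux cs i _ = _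
    rw [sigmaAux, hris, List.count_cons, cs.wordProd_cons]
    have hiff : cs.wordProd ω' * p.1 * (cs.wordProd ω')⁻¹ = cs.simple i
        ↔ (cs.wordProd ω')⁻¹ * cs.simple i * cs.wordProd ω' = p.1 := by
      constructor
      · intro h
        rw [← h]; group
      · intro h
        rw [← h]; group
    ext
    · show cs.simple i * (cs.wordProd ω' * p.1 * (cs.wordProd ω')⁻¹) * cs.simple i
        = cs.simple i * cs.wordProd ω' * p.1 * (cs.simple i * cs.wordProd ω')⁻¹
      rw [mul_inv_rev, cs.inv_simple]; group
    · simp only [beq_iff_eq]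
      show p.2 + ((cs.rightInvSeq ω').count p.1 : ZMod 2)
          + (if cs.wordProd ω' * p.1 * (cs.wordProd ω')⁻¹ = cs.simple i then 1 else 0)
        = p.2 + (((cs.rightInvSeq ω').count p.1
            + if (cs.wordProd ω')⁻¹ * cs.simple i * cs.wordProd ω' = p.1 then 1 else 0 : ℕ)
            : ZMod 2)
      rw [if_congr hiff rfl rfl]
      push_cast
      rw [add_assoc]

theorem alt_two_mul_succ (i j : B) (m : ℕ) :
    alternatingWord i j (2 * (m + 1)) = i :: j :: alternatingWord i j (2 * m) := by
  rw [show 2 * (m + 1) = (2 * m + 1) + 1 by omega, alternatingWord_succ',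
    alternatingWord_succ']
  simp [Nat.even_add_one, Nat.even_mul]

theorem sigma_liftable [DecidableEq W] : M.IsLiftable (sigmaPerm cs) := by
  intro i j
  have hprod : ∀ m : ℕ, ((alternatingWord i j (2 * m)).map (sigmaPerm cs)).prod
      = (sigmaPerm cs i * sigmaPerm cs j) ^ m := by
    intro m
    induction m with
    | zero => simp [alternatingWord]
    | succ m ih =>
      rw [alt_two_mul_succ, List.map_cons, List.map_cons, List.prod_cons, List.prod_cons, ih,
        pow_succ', mul_assoc]
  refine Equiv.ext fun p => ?_
  have hπ : cs.wordProd (alternatingWord i j (2 * M i j)) = 1 := by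
    rw [cs.prod_alternatingWord_eq_mul_pow, if_pos (even_two_mul _),
      show 2 * M i j / 2 = M i j by omega, one_mul, cs.simple_mul_simple_pow]
  obtain ⟨c, hc⟩ := ris_alt_even_count cs i j p.1
  have h0 : ((c + c : ℕ) : ZMod 2) = 0 := by
    push_cast
    rw [show (c : ZMod 2) + c = 2 * c by ring, show (2 : ZMod 2) = 0 by decide, zero_mul]
  rw [← hprod (M i j), sigma_prod, hπ, hc, h0, Equiv.Perm.one_apply]
  simp

noncomputable def theta : W →* Equiv.Perm (W × ZMod 2) :=
  letI := Classical.decEq W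
  cs.lift ⟨sigmaPerm cs, sigma_liftable cs⟩

theorem theta_wordProd (ω : List B) :
    letI := Classical.decEq W
    theta cs (cs.wordProd ω) = ((ω.map (sigmaPerm cs)).prod) := by
  letI := Classical.decEq W
  induction ω with
  | nil => simp [cs.wordProd_nil, theta]
  | cons i ω' ih =>
    rw [cs.wordProd_cons, List.map_cons, List.prod_cons, map_mul, ih, theta,
      cs.lift_apply_simple]

theorem count_ris_eq (ω ω' : List B) (h : cs.wordProd ω = cs.wordProd ω')
    (t : W) :
    letI := Classical.decEq W
    ((cs.rightInvSeq ω).count t : ZMod 2) = ((cs.rightInvSeq ω').count t : ZMod 2) := by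
  letI := Classical.decEq W
  have h1 := theta_wordProd cs ω
  have h2 := theta_wordProd cs ω'
  rw [h] at h1
  have := h1.symm.trans h2
  have happ := congrArg (fun f => (f (t, (0 : ZMod 2))).2) this
  simpa [sigma_prod] using happ

section S0
variable (S₀ : Set B) [DecidablePred (· ∈ S₀)]

noncomputable def R0pred : W → Bool :=
  fun t => @decide (∃ b ∈ S₀, IsConj (cs.simple b) t) (Classical.propDecidable _)

variable {S₀}

theorem countP_letters_eq_countP_ris
    (hS₀ : ∀ s ∈ S₀, ∀ s' : B, IsConj (cs.simple s) (cs.simple s') → s' ∈ S₀) (ω : List B) :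
    ω.countP (fun b => decide (b ∈ S₀))
      = (cs.rightInvSeq ω).countP (R0pred cs S₀) := by
  induction ω with
  | nil => rfl
  | cons i ω' ih =>
    have hris : cs.rightInvSeq (i :: ω') =
        ((cs.wordProd ω')⁻¹ * cs.simple i * cs.wordProd ω') :: cs.rightInvSeq ω' := rfl
    rw [hris, List.countP_cons, List.countP_cons, ih]
    congr 1
    have hconj : IsConj (cs.simple i) ((cs.wordProd ω')⁻¹ * cs.simple i * cs.wordProd ω') :=
      isConj_iff.mpr ⟨(cs.wordProd ω')⁻¹, by group⟩
    have hiff : (i ∈ S₀) ↔ ∃ b ∈ S₀, IsConj (cs.simple b)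
        ((cs.wordProd ω')⁻¹ * cs.simple i * cs.wordProd ω') := by
      constructor
      · intro h
        exact ⟨i, h, hconj⟩
      · rintro ⟨b, hb, hc⟩
        exact hS₀ b hb i (hc.trans hconj.symm)
    rw [R0pred]
    by_cases h : i ∈ S₀
    · rw [if_pos (decide_eq_true h), if_pos (@decide_eq_true _ (Classical.propDecidable _) (hiff.mp h))]
    · rw [if_neg (by simp only [decide_eq_true_eq]; exact h),
        if_neg (by simp only [decide_eq_true_eq]; exact fun hc => h (hiff.mpr hc))]

theorem countP_letters_welldefined
    (hS₀ : ∀ s ∈ S₀, ∀ s' : B, IsConj (cs.simple s) (cs.simple s') → s' ∈ S₀)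
    {ω ω' : List B} (hred : cs.IsReduced ω) (hred' : cs.IsReduced ω')
    (h : cs.wordProd ω = cs.wordProd ω') :
    ω.countP (fun b => decide (b ∈ S₀)) = ω'.countP (fun b => decide (b ∈ S₀)) := by
  letI := Classical.decEq W
  rw [countP_letters_eq_countP_ris cs hS₀, countP_letters_eq_countP_ris cs hS₀]
  have hperm : cs.rightInvSeq ω ~ cs.rightInvSeq ω' := by
    rw [List.perm_iff_count]
    intro t
    have hc := count_ris_eq cs ω ω' h t
    have h1 : (cs.rightInvSeq ω).count t ≤ 1 :=
      List.nodup_iff_count_le_one.mp hred.nodup_rightInvSeq t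
    have h2 : (cs.rightInvSeq ω').count t ≤ 1 :=
      List.nodup_iff_count_le_one.mp hred'.nodup_rightInvSeq t
    interval_cases h3 : (cs.rightInvSeq ω).count t <;>
      interval_cases h4 : (cs.rightInvSeq ω').count t <;> simp_all
  exact hperm.countP_eq _

end S0

section Main
variable (S₀ : Set B) [DecidablePred (· ∈ S₀)]

noncomputable def invCount (w : W) : ℕ :=
  (Classical.choose (cs.exists_reduced_word' w)).countP (fun b => decide (b ∈ S₀))

variable {S₀}

theorem invCount_eq (hS₀ : ∀ s ∈ S₀, ∀ s' : B, IsConj (cs.simple s) (cs.simple s') → s' ∈ S₀)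
    {ω : List B} (hred : cs.IsReduced ω) {w : W} (hw : cs.wordProd ω = w) :
    ω.countP (fun b => decide (b ∈ S₀)) = invCount cs S₀ w := by
  obtain ⟨h1, h2⟩ := Classical.choose_spec (cs.exists_reduced_word' w)
  exact countP_letters_welldefined cs hS₀ hred h1 (by rw [hw, ← h2])

theorem invCount_mul_simple
    (hS₀ : ∀ s ∈ S₀, ∀ s' : B, IsConj (cs.simple s) (cs.simple s') → s' ∈ S₀)
    (w : W) (i : B) (hi : i ∉ S₀) :
    invCount cs S₀ (w * cs.simple i) = invCount cs S₀ w := by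
  have aux : ∀ x : W, cs.length (x * cs.simple i) = cs.length x + 1 →
      invCount cs S₀ (x * cs.simple i) = invCount cs S₀ x := by
    intro x hlen
    obtain ⟨ω, hred, hx⟩ := cs.exists_reduced_word' x
    have hprod : cs.wordProd (ω ++ [i]) = x * cs.simple i := by
      rw [cs.wordProd_append, cs.wordProd_singleton, ← hx]
    have hred' : cs.IsReduced (ω ++ [i]) := by
      unfold CoxeterSystem.IsReduced
      rw [hprod, hlen, List.length_append, List.length_singleton]
      rw [CoxeterSystem.IsReduced] at hred
      rw [← hx] at hred
      omega
    rw [← invCount_eq cs hS₀ hred' hprod, ← invCount_eq cs hS₀ hred hx.symm,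
      List.countP_append]
    simp [hi]
  rcases cs.length_mul_simple w i with h | h
  · exact aux w h
  · have hww : w * cs.simple i * cs.simple i = w := by
      rw [mul_assoc, cs.simple_mul_simple_self, mul_one]
    have := aux (w * cs.simple i) (by rw [hww]; omega)
    rw [hww] at this
    exact this.symm

theorem invCount_mul_closure (T : Set B) (hS₀T : S₀ ⊆ T)
    (hS₀ : ∀ s ∈ S₀, ∀ s' : B, IsConj (cs.simple s) (cs.simple s') → s' ∈ S₀)
    {v : W} (hv : v ∈ Subgroup.closure (cs.simple '' Tᶜ)) (x : W) :
    invCount cs S₀ (x * v) = invCount cs S₀ x := by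
  induction hv using Subgroup.closure_induction generalizing x with
  | mem g hg =>
    obtain ⟨i, hiT, rfl⟩ := hg
    exact invCount_mul_simple cs hS₀ x i (fun hc => hiT (hS₀T hc))
  | one => rw [mul_one]
  | mul a b _ _ iha ihb =>
    rw [← mul_assoc, ihb, iha]
  | inv a _ iha =>
    have := iha (x * a⁻¹)
    rw [inv_mul_cancel_right] at this
    exact this.symm

end Main

theorem phi_fixes_closure (T : Set B) (φ : W →* W)
    (hφ₁ : ∀ s ∉ T, φ (cs.simple s) = cs.simple s)
    {x : W} (hx : x ∈ Subgroup.closure (cs.simple '' Tᶜ)) : φ x = x := by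
  induction hx using Subgroup.closure_induction with
  | mem g hg => obtain ⟨i, hiT, rfl⟩ := hg; exact hφ₁ i hiT
  | one => exact map_one φ
  | mul a b _ _ iha ihb => rw [map_mul, iha, ihb]
  | inv a _ iha => rw [map_inv, iha]

theorem phi_mem_closure (T : Set B) (φ : W →* W)
    (hφ₁ : ∀ s ∉ T, φ (cs.simple s) = cs.simple s)
    (hφ₂ : ∀ t ∈ T, φ (cs.simple t) = 1) (w : W) :
    φ w ∈ Subgroup.closure (cs.simple '' Tᶜ) := by
  obtain ⟨ω, rfl⟩ := cs.wordProd_surjective w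
  induction ω with
  | nil => rw [cs.wordProd_nil, map_one]; exact Subgroup.one_mem _
  | cons i ω' ih =>
    rw [cs.wordProd_cons, map_mul]
    apply Subgroup.mul_mem
    · by_cases h : i ∈ T
      · rw [hφ₂ i h]; exact Subgroup.one_mem _
      · rw [hφ₁ i h]; exact Subgroup.subset_closure ⟨i, h, rfl⟩
    · exact ih


end UniqueDecompositionAux

/-- Under the evenness assumption on `T ⊆ S`, every `w ∈ W` decomposes uniquely as `w = u * v`
with `u ∈ ker φ_T` and `v ∈ W_{S∖T}`. Moreover, if `S₀ ⊆ T` is closed under conjugacy of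
generators, then `ℓ_{S₀}(w) = ℓ_{S₀}(u)`, where `ℓ_{S₀}` counts (with multiplicity) the letters
from `S₀` in any reduced word representing the given element. -/
theorem unique_decomposition_and_count {B W : Type*} [Group W] (M : CoxeterMatrix B)
    (cs : CoxeterSystem M W) (T : Set B)
    (heven : ∀ t ∈ T, ∀ s ∉ T, Even (M t s))
    (φ : W →* W)
    (hφ₁ : ∀ s ∉ T, φ (cs.simple s) = cs.simple s)
    (hφ₂ : ∀ t ∈ T, φ (cs.simple t) = 1)
    (S₀ : Set B) [DecidablePred (· ∈ S₀)] (hS₀T : S₀ ⊆ T)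
    (hS₀ : ∀ s ∈ S₀, ∀ s' : B, IsConj (cs.simple s) (cs.simple s') → s' ∈ S₀)
    (w : W) :
    (∃! p : W × W, p.1 ∈ φ.ker ∧ p.2 ∈ Subgroup.closure (cs.simple '' Tᶜ) ∧ w = p.1 * p.2) ∧
    (∀ u v : W, u ∈ φ.ker → v ∈ Subgroup.closure (cs.simple '' Tᶜ) → w = u * v →
      ∀ ω ωᵤ : List B, cs.IsReduced ω → cs.wordProd ω = w →
        cs.IsReduced ωᵤ → cs.wordProd ωᵤ = u →
        ω.countP (fun i => decide (i ∈ S₀)) = ωᵤ.countP (fun i => decide (i ∈ S₀))) := by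
  constructor
  · refine ⟨(w * (φ w)⁻¹, φ w), ⟨?_, ?_, ?_⟩, ?_⟩
    · rw [MonoidHom.mem_ker, map_mul, map_inv,
        phi_fixes_closure cs T φ hφ₁ (phi_mem_closure cs T φ hφ₁ hφ₂ w), mul_inv_cancel]
    · exact phi_mem_closure cs T φ hφ₁ hφ₂ w
    · rw [inv_mul_cancel_right]
    · rintro ⟨u', v'⟩ ⟨h1, h2, h3⟩
      have hv' : v' = φ w := by
        rw [h3, map_mul, MonoidHom.mem_ker.mp h1, one_mul, phi_fixes_closure cs T φ hφ₁ h2]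
      have hu' : u' = w * (φ w)⁻¹ := by
        rw [eq_mul_inv_iff_mul_eq, ← hv']
        exact h3.symm
      exact Prod.ext hu' hv'
  · intro u v hu hv hw ω ωᵤ hωred hωw hωᵤred hωᵤu
    rw [invCount_eq cs hS₀ hωred hωw, invCount_eq cs hS₀ hωᵤred hωᵤu, hw,
      invCount_mul_closure cs T hS₀T hS₀ hv u]
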